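/- For every t ∈ [0,1), t³ · log((1+t²)/(1−t²)) + (1−t⁴) · log((1+t)/(1−t)) ≥ 2t. -/

import Mathlib

lemma artanh_key (x : ℝ) (hx0 : 0 ≤ x) (hx1 : x < 1) :
    2 * x ≤ Real.log ((1 + x) / (1 - x)) := by
  rcases eq_or_lt_of_le hx0 with h | h
  · simp [← h]
  set f : ℝ → ℝ := fun y => Real.log (1 + y) - Real.log (1 - y) - 2 * y with hf
  have hder : ∀ y ∈ Set.Ioo (-1 : ℝ) 1,
      HasDerivAt f (1 / (1 + y) - (-1) / (1 - y) - 2) y := by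
    intro y hy
    have h1 : HasDerivAt (fun y : ℝ => Real.log (1 + y)) (1 / (1 + y)) y := by
      simpa using (HasDerivAt.log ((hasDerivAt_id y).const_add 1) (by simp only [id_eq]; intro hc; nlinarith [hy.1]))
    have h2 : HasDerivAt (fun y : ℝ => Real.log (1 - y)) ((-1) / (1 - y)) y := by
      simpa using (HasDerivAt.log ((hasDerivAt_id y).const_sub 1) (by simp only [id_eq]; intro hc; nlinarith [hy.2]))
    exact ((h1.sub h2).sub ((hasDerivAt_id y).const_mul 2)).congr_deriv (by ring)
  have hsub : Set.Icc (0 : ℝ) x ⊆ Set.Ioo (-1 : ℝ) 1 := fun y hy =>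
    ⟨by linarith [hy.1], by linarith [hy.2]⟩
  have hdiff : DifferentiableOn ℝ f (Set.Ioo (-1 : ℝ) 1) := fun y hy =>
    (hder y hy).differentiableAt.differentiableWithinAt
  have hmono : MonotoneOn f (Set.Icc (0 : ℝ) x) := by
    apply monotoneOn_of_deriv_nonneg (convex_Icc 0 x)
      ((hdiff.continuousOn).mono hsub)
    · intro y hy
      exact (hdiff.mono (interior_subset.trans hsub)) y hy
    · intro y hy
      rw [interior_Icc] at hy
      have hy' : y ∈ Set.Ioo (-1 : ℝ) 1 := ⟨by linarith [hy.1], by linarith [hy.2]⟩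
      rw [(hder y hy').deriv]
      have h1 : (0:ℝ) < 1 + y := by linarith [hy'.1]
      have h2 : (0:ℝ) < 1 - y := by linarith [hy'.2]
      have : 1 / (1 + y) - (-1) / (1 - y) - 2
          = (2 * y ^ 2) / ((1 + y) * (1 - y)) := by
        field_simp; ring
      rw [this]
      positivity
  have h0 : f 0 ≤ f x := hmono ⟨le_refl 0, hx0⟩ ⟨hx0, le_refl x⟩ hx0
  have hf0 : f 0 = 0 := by simp [hf]
  rw [hf0, hf] at h0
  rw [Real.log_div (by linarith) (by linarith)]
  simp only at h0
  linarith

theorem log_combination_ge_two_mul :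
    ∀ t ∈ Set.Ico (0 : ℝ) 1,
      t ^ 3 * Real.log ((1 + t ^ 2) / (1 - t ^ 2)) +
          (1 - t ^ 4) * Real.log ((1 + t) / (1 - t)) ≥ 2 * t := by
  rintro t ⟨ht0, ht1⟩
  have h1 := artanh_key (t ^ 2) (by positivity) (by nlinarith)
  have h2 := artanh_key t ht0 ht1
  have ht3 : (0:ℝ) ≤ t ^ 3 := by positivity
  have ht4 : (0:ℝ) ≤ 1 - t ^ 4 := by nlinarith
  nlinarith [mul_le_mul_of_nonneg_left h1 ht3, mul_le_mul_of_nonneg_left h2 ht4]
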